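/- arXiv:1309.0068 — 2 statements merged into one kernel-verified Lean document; each statement's English description precedes it below -/
import Mathlib

section
/- Let A be a unital C*-algebra and r: A → A a linear map such that r(a)*·r(a) ≤ K·a*·a for all a ∈ A and some constant K ≥ 0. Then r(a) = r(1)·a for all a ∈ A. -/
set_option maxHeartbeats 1000000 in
open Finset in
private lemma key_lemma {A : Type*} [CStarAlgebra A] [PartialOrder A] [StarOrderedRing A]
    {a x : A} (ha : IsSelfAdjoint a) (hx : 0 ≤ x) {K : ℝ} (hK : 0 ≤ K)
    (h : ∀ t : ℝ, x ≤ K • ((a - algebraMap ℝ A t) * (a - algebraMap ℝ A t))) :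
    x = 0 := by
  rcases subsingleton_or_nontrivial A with hA | hA
  · exact Subsingleton.elim _ _
  have main : ∀ ε : ℝ, 0 < ε → ε ≤ 1 → ‖x‖ ≤ 8 * K * (‖a‖ + 1) * ε := by
    intro ε hε hε1
    set L := ‖a‖ with hLdef
    have hL0 : 0 ≤ L := norm_nonneg a
    set n : ℕ := ⌈2 * L / ε⌉₊ with hn
    have hnL : 2 * L ≤ n * ε := by
      rw [← div_le_iff₀ hε]
      exact Nat.le_ceil _
    have hnle : (n : ℝ) ≤ 2 * L / ε + 1 := (Nat.ceil_lt_add_one (by positivity)).le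
    -- ramp functions
    set ρ : ℝ → ℝ → ℝ := fun c s => min 1 (max 0 ((s - c) / ε)) with hρdef
    have hρ0 : ∀ c s, 0 ≤ ρ c s := fun c s => le_min (by norm_num) (le_max_left _ _)
    have hρ1 : ∀ c s, ρ c s ≤ 1 := fun c s => min_le_left _ _
    have hρ_eq0 : ∀ c s, s ≤ c → ρ c s = 0 := by
      intro c s hs
      have h' : (s - c) / ε ≤ 0 := div_nonpos_of_nonpos_of_nonneg (by linarith) hε.le
      simp [hρdef, max_eq_left h']
    have hρ_eq1 : ∀ c s, c + ε ≤ s → ρ c s = 1 := by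
      intro c s hs
      have h1 : (1:ℝ) ≤ (s - c) / ε := (le_div_iff₀ hε).mpr (by linarith)
      have h0 : (0:ℝ) ≤ (s - c) / ε := le_trans (by norm_num) h1
      simp [hρdef, max_eq_right h0, min_eq_left h1]
    have hρ_mono : ∀ (c c' : ℝ) (s : ℝ), c ≤ c' → ρ c' s ≤ ρ c s := by
      intro c c' s hcc
      have hdiv : (s - c') / ε ≤ (s - c) / ε := by gcongr <;> linarith
      exact min_le_min le_rfl (max_le_max le_rfl hdiv)
    -- the partition functions
    set f : ℕ → ℝ → ℝ := fun i s => ρ (-L + ((i:ℝ) - 1) * ε) s with hfdef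
    set χ : ℕ → ℝ → ℝ := fun i s => f i s - f (i+1) s with hχdef
    have hfi : ∀ i s, f i s = ρ (-L + ((i:ℝ) - 1) * ε) s := fun i s => rfl
    have hχi : ∀ i s, χ i s = f i s - f (i+1) s := fun i s => rfl
    have hχ0 : ∀ i s, 0 ≤ χ i s := by
      intro i s
      rw [hχi, sub_nonneg, hfi, hfi]
      apply hρ_mono
      push_cast
      nlinarith
    have hχ1 : ∀ i s, χ i s ≤ 1 := by
      intro i s
      have h1 := hρ1 (-L + ((i:ℝ) - 1) * ε) s
      have h2 := hρ0 (-L + ((((i+1:ℕ)):ℝ) - 1) * ε) s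
      rw [← hfi i s] at h1
      rw [← hfi (i+1) s] at h2
      rw [hχi]
      linarith
    have hχcont : ∀ i, Continuous (χ i) := by
      intro i
      apply Continuous.sub <;>
      · apply Continuous.min continuous_const
        apply Continuous.max continuous_const
        fun_prop
    -- support bound
    have hχsupp : ∀ i s, χ i s ≠ 0 → |s - (-L + (i:ℝ) * ε)| ≤ ε := by
      intro i s hs
      by_contra hcon
      rw [not_le, lt_abs] at hcon
      apply hs
      rcases hcon with hgt | hlt
      · have e1 : f i s = 1 := by rw [hfi]; exact hρ_eq1 _ _ (by push_cast; linarith)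
        have e2 : f (i+1) s = 1 := by rw [hfi]; exact hρ_eq1 _ _ (by push_cast; linarith)
        rw [hχi, e1, e2, sub_self]
      · have e1 : f i s = 0 := by rw [hfi]; exact hρ_eq0 _ _ (by push_cast; linarith)
        have e2 : f (i+1) s = 0 := by rw [hfi]; exact hρ_eq0 _ _ (by push_cast; linarith)
        rw [hχi, e1, e2, sub_self]
    -- disjointness
    have hχdisj : ∀ i j : ℕ, i + 2 ≤ j → ∀ s, χ i s * χ j s = 0 := by
      intro i j hij s
      have hijR : (i:ℝ) + 2 ≤ (j:ℝ) := by exact_mod_cast hij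
      rcases le_or_gt s (-L + ((i:ℝ) + 1) * ε) with hs | hs
      · have e1 : f j s = 0 := by rw [hfi]; exact hρ_eq0 _ _ (by push_cast; nlinarith)
        have e2 : f (j+1) s = 0 := by rw [hfi]; exact hρ_eq0 _ _ (by push_cast; nlinarith)
        rw [hχi j, e1, e2, sub_self, mul_zero]
      · have e1 : f i s = 1 := by rw [hfi]; exact hρ_eq1 _ _ (by push_cast; nlinarith)
        have e2 : f (i+1) s = 1 := by rw [hfi]; exact hρ_eq1 _ _ (by push_cast; nlinarith)
        rw [hχi i, e1, e2, sub_self, zero_mul]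
    -- sum to one on the spectrum
    have hspec : ∀ s ∈ spectrum ℝ a, |s| ≤ L := by
      intro s hs
      simpa using spectrum.norm_le_norm_of_mem hs
    have hsum : ∀ s : ℝ, |s| ≤ L → ∑ i ∈ range (n+1), χ i s = 1 := by
      intro s hs
      rw [abs_le] at hs
      have htel : ∑ i ∈ range (n+1), χ i s = f 0 s - f (n+1) s :=
        Finset.sum_range_sub' (fun i => f i s) (n+1)
      have e1 : f 0 s = 1 := by rw [hfi]; exact hρ_eq1 _ _ (by push_cast; linarith)
      have e2 : f (n+1) s = 0 := by rw [hfi]; exact hρ_eq0 _ _ (by push_cast; linarith)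
      rw [htel, e1, e2, sub_zero]
    -- move to the algebra
    have hXsa : ∀ i, IsSelfAdjoint (cfc (χ i) a) := fun i => cfc_predicate (χ i) a
    have hXsum : ∑ i ∈ range (n+1), cfc (χ i) a = 1 := by
      rw [← cfc_sum χ a _ (fun i _ => (hχcont i).continuousOn)]
      have h1 : cfc (∑ i ∈ range (n+1), χ i) a = cfc (1 : ℝ → ℝ) a := by
        apply cfc_congr
        intro s hs
        simpa using hsum s (hspec s hs)
      rw [h1, cfc_one ℝ a]
    have hXdisj : ∀ i j : ℕ, i + 2 ≤ j → cfc (χ i) a * cfc (χ j) a = 0 ∧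
        cfc (χ j) a * cfc (χ i) a = 0 := by
      intro i j hij
      constructor
      · rw [← cfc_mul _ _ a ((hχcont i).continuousOn) ((hχcont j).continuousOn)]
        have : cfc (fun s => χ i s * χ j s) a = cfc (fun _ : ℝ => (0:ℝ)) a :=
          cfc_congr fun s _ => hχdisj i j hij s
        rw [this, cfc_const 0 a, map_zero]
      · rw [← cfc_mul _ _ a ((hχcont j).continuousOn) ((hχcont i).continuousOn)]
        have : cfc (fun s => χ j s * χ i s) a = cfc (fun _ : ℝ => (0:ℝ)) a :=
          cfc_congr fun s _ => (mul_comm (χ i s) (χ j s)) ▸ hχdisj i j hij s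
        rw [this, cfc_const 0 a, map_zero]
    -- main conjugation bound
    have hXbound : ∀ i : ℕ, ‖cfc (χ i) a * x * cfc (χ i) a‖ ≤ K * ε^2 := by
      intro i
      set t : ℝ := -L + (i:ℝ) * ε with htdef
      have hconj : cfc (χ i) a * x * cfc (χ i) a ≤
          cfc (χ i) a * (K • ((a - algebraMap ℝ A t) * (a - algebraMap ℝ A t))) * cfc (χ i) a := by
        have h' := star_left_conjugate_le_conjugate (h t) (cfc (χ i) a)
        rwa [(hXsa i).star_eq] at h'
      have hsub : cfc (fun s : ℝ => s - t) a = a - algebraMap ℝ A t := by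
        rw [cfc_sub _ _ a (by fun_prop) (by fun_prop), cfc_id' ℝ a, cfc_const t a]
      have hcq : Continuous fun s : ℝ => (s - t) * (s - t) := by fun_prop
      have hc1 : Continuous fun s : ℝ => χ i s * ((s - t) * (s - t)) := (hχcont i).mul hcq
      have hprod : cfc (fun s : ℝ => χ i s * ((s - t) * (s - t)) * χ i s) a
          = cfc (χ i) a * ((a - algebraMap ℝ A t) * (a - algebraMap ℝ A t)) * cfc (χ i) a := by
        rw [cfc_mul _ _ a hc1.continuousOn (hχcont i).continuousOn,
          cfc_mul _ _ a (hχcont i).continuousOn hcq.continuousOn,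
          cfc_mul _ _ a (by fun_prop) (by fun_prop), hsub]
      have hXsq : cfc (χ i) a * ((a - algebraMap ℝ A t) * (a - algebraMap ℝ A t)) * cfc (χ i) a
          ≤ (ε^2) • (1 : A) := by
        rw [← hprod]
        calc cfc (fun s : ℝ => χ i s * ((s - t) * (s - t)) * χ i s) a
            ≤ cfc (fun _ : ℝ => ε^2) a := by
              refine cfc_mono (fun s _ => ?_) (hc1.mul (hχcont i)).continuousOn
                continuousOn_const
              rcases eq_or_ne (χ i s) 0 with h0 | h0
              · rw [h0]
                simp only [zero_mul, mul_zero]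
                positivity
              · have h1 := abs_le.mp (hχsupp i s h0)
                have h2 : (s - t) * (s - t) ≤ ε^2 := by
                  rw [htdef]
                  nlinarith [h1.1, h1.2]
                have h3 := hχ0 i s
                have h4 := hχ1 i s
                calc χ i s * ((s - t) * (s - t)) * χ i s
                    ≤ χ i s * ε^2 * χ i s :=
                      mul_le_mul_of_nonneg_right (mul_le_mul_of_nonneg_left h2 h3) h3
                  _ ≤ 1 * ε^2 * 1 := by
                      apply mul_le_mul _ h4 h3 (by positivity)
                      exact mul_le_mul_of_nonneg_right h4 (by positivity)
                  _ = ε^2 := by ring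
          _ = (ε^2) • (1 : A) := by
              rw [cfc_const _ a, Algebra.algebraMap_eq_smul_one]
      have hle : cfc (χ i) a * x * cfc (χ i) a ≤ (K * ε^2) • (1 : A) := by
        refine hconj.trans ?_
        have heq : cfc (χ i) a * (K • ((a - algebraMap ℝ A t) * (a - algebraMap ℝ A t))) * cfc (χ i) a
            = K • (cfc (χ i) a * ((a - algebraMap ℝ A t) * (a - algebraMap ℝ A t)) * cfc (χ i) a) := by
          rw [mul_smul_comm, smul_mul_assoc]
        rw [heq, mul_smul]
        exact smul_le_smul_of_nonneg_left hXsq hK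
      have hpos : 0 ≤ cfc (χ i) a * x * cfc (χ i) a := by
        have h' := star_left_conjugate_nonneg hx (cfc (χ i) a)
        rwa [(hXsa i).star_eq] at h'
      calc ‖cfc (χ i) a * x * cfc (χ i) a‖ ≤ ‖(K * ε^2) • (1 : A)‖ :=
            CStarAlgebra.norm_le_norm_of_nonneg_of_le hpos hle
        _ = K * ε^2 := by
            rw [norm_smul, norm_one, mul_one, Real.norm_of_nonneg (by positivity)]
    -- square root of x
    set y : A := CFC.sqrt x with hydef
    have hy0 : 0 ≤ y := CFC.sqrt_nonneg (a := x)
    have hysa : IsSelfAdjoint y := IsSelfAdjoint.of_nonneg hy0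
    have hyy : y * y = x := CFC.sqrt_mul_sqrt_self x hx
    have hznorm : ∀ i, ‖y * cfc (χ i) a‖^2 ≤ K * ε^2 := by
      intro i
      have heq : star (y * cfc (χ i) a) * (y * cfc (χ i) a) = cfc (χ i) a * x * cfc (χ i) a := by
        rw [star_mul, (hXsa i).star_eq, hysa.star_eq, mul_assoc, ← mul_assoc y y, hyy, ← mul_assoc]
      calc ‖y * cfc (χ i) a‖^2 = ‖star (y * cfc (χ i) a) * (y * cfc (χ i) a)‖ := by
            rw [CStarRing.norm_star_mul_self, sq]
        _ = ‖cfc (χ i) a * x * cfc (χ i) a‖ := by rw [heq]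
        _ ≤ K * ε^2 := hXbound i
    -- norm bound for partial sums over parity classes
    have hw : ∀ P : Finset ℕ, P ⊆ range (n+1) →
        (∀ i ∈ P, ∀ j ∈ P, i ≠ j → cfc (χ i) a * cfc (χ j) a = 0) →
        ‖∑ i ∈ P, y * cfc (χ i) a‖^2 ≤ ((n:ℝ)+1) * (K * ε^2) := by
      intro P hP hdisj
      have hww : (∑ i ∈ P, y * cfc (χ i) a) * star (∑ i ∈ P, y * cfc (χ i) a)
          = ∑ i ∈ P, (y * cfc (χ i) a) * star (y * cfc (χ i) a) := by
        rw [star_sum, Finset.sum_mul_sum]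
        apply Finset.sum_congr rfl
        intro i hi
        rw [Finset.sum_eq_single_of_mem i hi]
        intro j hj hji
        rw [star_mul, (hXsa j).star_eq, hysa.star_eq, mul_assoc, ← mul_assoc (cfc (χ i) a),
          hdisj i hi j hj (Ne.symm hji), zero_mul, mul_zero]
      calc ‖∑ i ∈ P, y * cfc (χ i) a‖^2
          = ‖(∑ i ∈ P, y * cfc (χ i) a) * star (∑ i ∈ P, y * cfc (χ i) a)‖ := by
            rw [CStarRing.norm_self_mul_star, sq]
        _ = ‖∑ i ∈ P, (y * cfc (χ i) a) * star (y * cfc (χ i) a)‖ := by rw [hww]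
        _ ≤ ∑ i ∈ P, ‖(y * cfc (χ i) a) * star (y * cfc (χ i) a)‖ := norm_sum_le _ _
        _ ≤ ∑ _i ∈ P, (K * ε^2) := by
            apply Finset.sum_le_sum
            intro i _
            rw [CStarRing.norm_self_mul_star, ← sq]
            exact hznorm i
        _ = (P.card : ℝ) * (K * ε^2) := by rw [Finset.sum_const, nsmul_eq_mul]
        _ ≤ ((n:ℝ)+1) * (K * ε^2) := by
            apply mul_le_mul_of_nonneg_right _ (by positivity)
            have := Finset.card_le_card hP
            rw [Finset.card_range] at this
            exact_mod_cast this
    -- split into even and odd indices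
    have hparity : ∀ P : Finset ℕ, (∀ i ∈ P, ∀ j ∈ P, i % 2 = j % 2) →
        ∀ i ∈ P, ∀ j ∈ P, i ≠ j → cfc (χ i) a * cfc (χ j) a = 0 := by
      intro P hPpar i hi j hj hij
      have hm := hPpar i hi j hj
      rcases lt_or_gt_of_ne hij with hlt | hgt
      · exact (hXdisj i j (by omega)).1
      · exact (hXdisj j i (by omega)).2
    set E : Finset ℕ := (range (n+1)).filter (fun i => i % 2 = 0) with hE
    set O : Finset ℕ := (range (n+1)).filter (fun i => ¬ i % 2 = 0) with hO
    have hEdisj : ∀ i ∈ E, ∀ j ∈ E, i ≠ j → cfc (χ i) a * cfc (χ j) a = 0 := by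
      apply hparity
      intro i hi j hj
      rw [hE, Finset.mem_filter] at hi hj
      omega
    have hOdisj : ∀ i ∈ O, ∀ j ∈ O, i ≠ j → cfc (χ i) a * cfc (χ j) a = 0 := by
      apply hparity
      intro i hi j hj
      rw [hO, Finset.mem_filter] at hi hj
      omega
    have hEb := hw E (Finset.filter_subset _ _) hEdisj
    have hOb := hw O (Finset.filter_subset _ _) hOdisj
    set B : ℝ := ((n:ℝ)+1) * (K * ε^2) with hB
    have hB0 : 0 ≤ B := by positivity
    have hEnorm : ‖∑ i ∈ E, y * cfc (χ i) a‖ ≤ Real.sqrt B := by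
      rw [show B = Real.sqrt B * Real.sqrt B from (Real.mul_self_sqrt hB0).symm] at hEb
      nlinarith [norm_nonneg (∑ i ∈ E, y * cfc (χ i) a), Real.sqrt_nonneg B]
    have hOnorm : ‖∑ i ∈ O, y * cfc (χ i) a‖ ≤ Real.sqrt B := by
      rw [show B = Real.sqrt B * Real.sqrt B from (Real.mul_self_sqrt hB0).symm] at hOb
      nlinarith [norm_nonneg (∑ i ∈ O, y * cfc (χ i) a), Real.sqrt_nonneg B]
    have hyeq : y = (∑ i ∈ E, y * cfc (χ i) a) + (∑ i ∈ O, y * cfc (χ i) a) := by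
      rw [hE, hO, Finset.sum_filter_add_sum_filter_not, ← Finset.mul_sum, hXsum, mul_one]
    have hynorm : ‖y‖ ≤ 2 * Real.sqrt B := by
      calc ‖y‖ = ‖(∑ i ∈ E, y * cfc (χ i) a) + (∑ i ∈ O, y * cfc (χ i) a)‖ := by rw [← hyeq]
        _ ≤ ‖∑ i ∈ E, y * cfc (χ i) a‖ + ‖∑ i ∈ O, y * cfc (χ i) a‖ := norm_add_le _ _
        _ ≤ 2 * Real.sqrt B := by linarith
    have hxnorm : ‖x‖ ≤ 4 * B := by
      have h1 : ‖x‖ = ‖y‖ * ‖y‖ := by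
        conv_lhs => rw [← hyy]
        rw [show y * y = star y * y from by rw [hysa.star_eq], CStarRing.norm_star_mul_self]
      rw [h1]
      have h2 := Real.mul_self_sqrt hB0
      nlinarith [Real.sqrt_nonneg B, norm_nonneg y]
    have hnε : (n:ℝ) * ε ≤ 2*L + ε := by
      have h' := mul_le_mul_of_nonneg_right hnle hε.le
      calc (n:ℝ)*ε ≤ (2*L/ε + 1)*ε := h'
        _ = 2*L + ε := by field_simp
    calc ‖x‖ ≤ 4 * B := hxnorm
      _ = 4*((n:ℝ)*ε)*(K*ε) + 4*(K*ε^2) := by rw [hB]; ring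
      _ ≤ 4*(2*L+ε)*(K*ε) + 4*(K*ε^2) := by
          apply add_le_add_left
          apply mul_le_mul_of_nonneg_right _ (by positivity)
          nlinarith
      _ ≤ 8 * K * (L + 1) * ε := by nlinarith [hε.le, hε1, hK, hL0, mul_nonneg hK hε.le]
  -- conclude
  have hx0 : ‖x‖ ≤ 0 := by
    by_contra hc
    push_neg at hc
    set C := 8 * K * (‖a‖ + 1) with hC
    have hC0 : 0 ≤ C := by positivity
    set ε := min 1 (‖x‖ / (2 * (C + 1))) with hεd
    have hε0 : 0 < ε := lt_min one_pos (by positivity)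
    have hε1 : ε ≤ 1 := min_le_left _ _
    have h1 := main ε hε0 hε1
    have h2 : C * ε ≤ C * (‖x‖ / (2 * (C + 1))) :=
      mul_le_mul_of_nonneg_left (min_le_right _ _) hC0
    have h3 : C * (‖x‖ / (2 * (C + 1))) < ‖x‖ := by
      rw [show C * (‖x‖ / (2 * (C + 1))) = (C * ‖x‖) / (2 * (C + 1)) from by ring,
        div_lt_iff₀ (by positivity)]
      nlinarith
    have h4 : 8 * K * (‖a‖ + 1) * ε = C * ε := by rw [hC]
    rw [h4] at h1
    linarith
  exact norm_le_zero_iff.mp hx0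

/-- A C*-semi-inner product on a right `A`-module `X` (Janfada–Shamsi Gamchi–Niknam). -/
structure CSIP (A : Type*) [CStarAlgebra A] [PartialOrder A] [StarOrderedRing A]
    (X : Type*) [AddCommGroup X] [Module ℂ X] where
  /-- the `A`-valued semi-inner product -/
  ip : X → X → A
  /-- the right `A`-module action on `X` -/
  rsmul : X → A → X
  rsmul_add_left : ∀ (x y : X) (a : A), rsmul (x + y) a = rsmul x a + rsmul y a
  rsmul_add_right : ∀ (x : X) (a b : A), rsmul x (a + b) = rsmul x a + rsmul x b
  rsmul_mul : ∀ (x : X) (a b : A), rsmul x (a * b) = rsmul (rsmul x a) b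
  rsmul_one : ∀ x : X, rsmul x 1 = x
  rsmul_smul_one : ∀ (x : X) (c : ℂ), rsmul x (c • (1 : A)) = c • x
  ip_nonneg : ∀ x, 0 ≤ ip x x
  ip_definite : ∀ x, ip x x = 0 → x = 0
  ip_add_right : ∀ x y z, ip x (y + z) = ip x y + ip x z
  ip_smul_right : ∀ (c : ℂ) (x y : X), ip x (c • y) = c • ip x y
  ip_rsmul_right : ∀ (x y : X) (a : A), ip x (rsmul y a) = ip x y * a
  ip_rsmul_left : ∀ (x y : X) (a : A), ip (rsmul x a) y = star a * ip x y
  cauchy_schwarz : ∀ x y, ‖ip y x‖ ^ 2 ≤ ‖ip y y‖ * ‖ip x x‖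

/-- Paschke–Johnson lemma: if `r(a)*r(a) ≤ K a*a` then `r(a) = r(1)a`. -/
theorem stmt10 (A : Type*) [CStarAlgebra A] [PartialOrder A] [StarOrderedRing A]
    (r : A →ₗ[ℂ] A) (K : ℝ) (hK : 0 ≤ K)
    (h : ∀ a : A, star (r a) * r a ≤ K • (star a * a)) :
    ∀ a : A, r a = r 1 * a := by
  have hr1 : star (r 1) * r 1 ≤ algebraMap ℝ A (‖r 1‖^2) :=
    CStarAlgebra.star_mul_le_algebraMap_norm_sq
  set K' : ℝ := 2*K + 2*‖r 1‖^2 with hK'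
  have hK'0 : 0 ≤ K' := by positivity
  -- the difference map satisfies the same kind of inequality
  have hd : ∀ b : A, star (r b - r 1 * b) * (r b - r 1 * b) ≤ K' • (star b * b) := by
    intro b
    have h1 : star (r b - r 1 * b) * (r b - r 1 * b)
        ≤ (star (r b) * r b + star (r b) * r b)
          + (star (r 1 * b) * (r 1 * b) + star (r 1 * b) * (r 1 * b)) := by
      calc star (r b - r 1 * b) * (r b - r 1 * b)
          ≤ star (r b - r 1 * b) * (r b - r 1 * b) + star (r b + r 1 * b) * (r b + r 1 * b) :=
            le_add_of_nonneg_right (star_mul_self_nonneg _)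
        _ = (star (r b) * r b + star (r b) * r b)
            + (star (r 1 * b) * (r 1 * b) + star (r 1 * b) * (r 1 * b)) := by
            rw [star_sub, star_add]
            noncomm_ring
    have h2 : star (r 1 * b) * (r 1 * b) ≤ (‖r 1‖^2) • (star b * b) := by
      have e1 : star (r 1 * b) * (r 1 * b) = star b * (star (r 1) * r 1) * b := by
        rw [star_mul]
        noncomm_ring
      have e2 : star b * (star (r 1) * r 1) * b ≤ star b * algebraMap ℝ A (‖r 1‖^2) * b :=
        star_left_conjugate_le_conjugate hr1 b
      have e3 : star b * algebraMap ℝ A (‖r 1‖^2) * b = (‖r 1‖^2) • (star b * b) := by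
        rw [Algebra.algebraMap_eq_smul_one, mul_smul_comm, mul_one, smul_mul_assoc]
      rw [e1]
      exact e2.trans_eq e3
    have h3 : star (r b) * r b ≤ K • (star b * b) := h b
    have h4 : K' • (star b * b)
        = (K • (star b * b) + K • (star b * b))
          + ((‖r 1‖^2) • (star b * b) + (‖r 1‖^2) • (star b * b)) := by
      rw [hK']
      module
    rw [h4]
    exact h1.trans (add_le_add (add_le_add h3 h3) (add_le_add h2 h2))
  -- selfadjoint case
  have hsa : ∀ b : A, IsSelfAdjoint b → r b = r 1 * b := by
    intro b hb
    have hx : (0:A) ≤ star (r b - r 1 * b) * (r b - r 1 * b) := star_mul_self_nonneg _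
    have hkey : star (r b - r 1 * b) * (r b - r 1 * b) = 0 := by
      apply key_lemma hb hx hK'0
      intro t
      have e0 : algebraMap ℝ A t = (t:ℂ) • (1:A) := by
        rw [Algebra.algebraMap_eq_smul_one]
        norm_num
      have e1 : r (b - algebraMap ℝ A t) - r 1 * (b - algebraMap ℝ A t) = r b - r 1 * b := by
        rw [map_sub, mul_sub, e0, map_smul, mul_smul_comm, mul_one]
        abel
      have e2 : star (b - algebraMap ℝ A t) = b - algebraMap ℝ A t := by
        rw [star_sub, hb.star_eq, e0, star_smul, star_one]
        norm_num
      have h' := hd (b - algebraMap ℝ A t)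
      rw [e1, e2] at h'
      exact h'
    have := CStarRing.star_mul_self_eq_zero_iff (r b - r 1 * b) |>.mp hkey
    rwa [sub_eq_zero] at this
  intro a
  obtain ⟨b, c, hbsa, hcsa, hbc⟩ :
      ∃ b c : A, IsSelfAdjoint b ∧ IsSelfAdjoint c ∧ b + Complex.I • c = a := by
    refine ⟨(2:ℂ)⁻¹ • (a + star a), (-(Complex.I)/2) • (a - star a), ?_, ?_, ?_⟩
    · rw [IsSelfAdjoint, star_smul, star_add, star_star]
      congr 1
      · simp
      · exact add_comm _ _
    · rw [IsSelfAdjoint, star_smul, star_sub, star_star]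
      have hstar : star (-Complex.I/2) = Complex.I/2 := by
        simp [Complex.ext_iff]
      rw [hstar, ← neg_sub a (star a), smul_neg, ← neg_smul, neg_div]
    · rw [smul_smul]
      rw [show Complex.I * (-(Complex.I)/2) = (2:ℂ)⁻¹ from by
        rw [mul_div_assoc', mul_neg, Complex.I_mul_I]; norm_num]
      rw [smul_add, smul_sub]
      module
  calc r a = r (b + Complex.I • c) := by rw [hbc]
    _ = r b + Complex.I • r c := by rw [map_add, map_smul r Complex.I c]
    _ = r 1 * b + Complex.I • (r 1 * c) := by rw [hsa b hbsa, hsa c hcsa]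
    _ = r 1 * (b + Complex.I • c) := by rw [mul_add, mul_smul_comm Complex.I (r 1) c]
    _ = r 1 * a := by rw [hbc]
end

section
/- Let X and Y be C*-semi-inner product modules over a unital C*-algebra A and T: X → Y a bounded A-linear map with ‖T‖ ≤ 1. Then [Tx, Tx] ≤ [x, x] for all x ∈ X. -/
/-- A bounded `A`-linear map with `‖T‖ ≤ 1` satisfies `[Tx,Tx] ≤ [x,x]`. -/
theorem stmt12 (A : Type*) [CStarAlgebra A] [PartialOrder A] [StarOrderedRing A]
    (X Y : Type*) [AddCommGroup X] [Module ℂ X] [AddCommGroup Y] [Module ℂ Y]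
    (SX : CSIP A X) (SY : CSIP A Y) (T : X →ₗ[ℂ] Y)
    (hA : ∀ (x : X) (a : A), T (SX.rsmul x a) = SY.rsmul (T x) a)
    (hT : ∀ x : X, Real.sqrt ‖SY.ip (T x) (T x)‖ ≤ Real.sqrt ‖SX.ip x x‖) :
    ∀ x : X, SY.ip (T x) (T x) ≤ SX.ip x x := by
  have hN : ∀ z : X, ‖SY.ip (T z) (T z)‖ ≤ ‖SX.ip z z‖ := by
    intro z
    calc ‖SY.ip (T z) (T z)‖ = (Real.sqrt ‖SY.ip (T z) (T z)‖) ^ 2 :=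
          (Real.sq_sqrt (norm_nonneg _)).symm
      _ ≤ (Real.sqrt ‖SX.ip z z‖) ^ 2 := by
          exact pow_le_pow_left₀ (Real.sqrt_nonneg _) (hT z) 2
      _ = ‖SX.ip z z‖ := Real.sq_sqrt (norm_nonneg _)
  intro x
  set b : A := SX.ip x x with hb
  set d : A := SY.ip (T x) (T x) with hd
  have hb0 : 0 ≤ b := SX.ip_nonneg x
  have hd0 : 0 ≤ d := SY.ip_nonneg (T x)
  -- key step : for every ε > 0, d ≤ b + ε • 1
  have key : ∀ ε : ℝ, 0 < ε → d ≤ b + ε • (1 : A) := by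
    intro ε hε
    set c : A := b + ε • (1 : A) with hc
    have hc0 : 0 ≤ c := add_nonneg hb0 (smul_nonneg hε.le zero_le_one)
    have hcsa : IsSelfAdjoint c := .of_nonneg hc0
    have hεc : algebraMap ℝ A ε ≤ c := by
      rw [Algebra.algebraMap_eq_smul_one]
      exact le_add_of_nonneg_left hb0
    have hspec : ∀ t ∈ spectrum ℝ c, ε ≤ t :=
      (algebraMap_le_iff_le_spectrum (a := c) hcsa).mp hεc
    have hspec0 : ∀ t ∈ spectrum ℝ c, (0 : ℝ) < t := fun t ht => hε.trans_le (hspec t ht)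
    set f : ℝ → ℝ := fun t => (Real.sqrt t)⁻¹ with hf
    have hfc : ContinuousOn f (spectrum ℝ c) := by
      apply ContinuousOn.inv₀ (Real.continuous_sqrt.continuousOn)
      intro t ht
      exact (Real.sqrt_pos.mpr (hspec0 t ht)).ne'
    have hsc : ContinuousOn Real.sqrt (spectrum ℝ c) := Real.continuous_sqrt.continuousOn
    set a : A := cfc f c with ha
    set s : A := cfc Real.sqrt c with hs
    have hasa : IsSelfAdjoint a := cfc_predicate f c
    have hssa : IsSelfAdjoint s := cfc_predicate Real.sqrt c
    -- s * a = 1 and a * s = 1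
    have hsa1 : s * a = 1 := by
      rw [hs, ha, ← cfc_mul _ _ c hsc hfc]
      rw [cfc_congr (g := fun _ : ℝ => (1 : ℝ)) (fun t ht => by
        simp only [hf]; field_simp [(Real.sqrt_pos.mpr (hspec0 t ht)).ne'])]
      exact cfc_one ℝ c
    have has1 : a * s = 1 := by
      rw [hs, ha, ← cfc_mul _ _ c hfc hsc]
      rw [cfc_congr (g := fun _ : ℝ => (1 : ℝ)) (fun t ht => by
        simp only [hf]; field_simp [(Real.sqrt_pos.mpr (hspec0 t ht)).ne'])]
      exact cfc_one ℝ c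
    have hss : s * s = c := by
      rw [hs, ← cfc_mul _ _ c hsc hsc]
      rw [cfc_congr (g := fun t : ℝ => t) (fun t ht => Real.mul_self_sqrt (hspec0 t ht).le)]
      exact cfc_id ℝ c
    -- b as a function of c
    have hbc : b = cfc (fun t : ℝ => t - ε) c := by
      rw [cfc_sub _ _ c (by fun_prop) (by fun_prop), cfc_id' ℝ c, cfc_const ε c,
        Algebra.algebraMap_eq_smul_one, hc]
      abel
    -- ‖a * b * a‖ ≤ 1
    have haba : a * b * a = cfc (fun t : ℝ => f t * (t - ε) * f t) c := by
      have h1 : ContinuousOn (fun t : ℝ => t - ε) (spectrum ℝ c) := by fun_prop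
      rw [hbc, ha, ← cfc_mul f (fun t : ℝ => t - ε) c hfc h1,
        ← cfc_mul (fun t : ℝ => f t * (t - ε)) f c (hfc.mul h1) hfc]
    have hnba : ‖a * b * a‖ ≤ 1 := by
      rw [haba]
      apply norm_cfc_le zero_le_one
      intro t ht
      have ht0 : 0 < t := hspec0 t ht
      have hst : Real.sqrt t ≠ 0 := (Real.sqrt_pos.mpr ht0).ne'
      have : f t * (t - ε) * f t = (t - ε) / t := by
        simp only [hf]
        rw [mul_comm ((Real.sqrt t)⁻¹), mul_assoc, ← mul_inv, Real.mul_self_sqrt ht0.le,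
          div_eq_mul_inv]
      rw [this, Real.norm_eq_abs, abs_div, abs_of_nonneg (sub_nonneg.mpr (hspec t ht)),
        abs_of_pos ht0]
      rw [div_le_one ht0]
      linarith
    -- relate a * d * a and a * b * a to inner products
    set xa : X := SX.rsmul x a with hxa
    have hipxa : SX.ip xa xa = a * b * a := by
      rw [hxa, SX.ip_rsmul_left, SX.ip_rsmul_right, hasa.star_eq, ← hb, mul_assoc]
    have hipTxa : SY.ip (T xa) (T xa) = a * d * a := by
      rw [hxa, hA, SY.ip_rsmul_left, SY.ip_rsmul_right, hasa.star_eq, ← hd, mul_assoc]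
    have hada_norm : ‖a * d * a‖ ≤ 1 := by
      calc ‖a * d * a‖ = ‖SY.ip (T xa) (T xa)‖ := by rw [hipTxa]
        _ ≤ ‖SX.ip xa xa‖ := hN xa
        _ = ‖a * b * a‖ := by rw [hipxa]
        _ ≤ 1 := hnba
    have hada_nonneg : 0 ≤ a * d * a := by
      have := star_left_conjugate_nonneg hd0 a
      rwa [hasa.star_eq] at this
    have hada_le_one : a * d * a ≤ 1 :=
      (CStarAlgebra.norm_le_one_iff_of_nonneg _ hada_nonneg).mp hada_norm
    -- conjugate by s
    have hconj := star_left_conjugate_le_conjugate hada_le_one s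
    rw [hssa.star_eq, mul_one, hss] at hconj
    have e1 : s * (a * d * a) * s = d := by
      have : s * (a * d * a) * s = (s * a) * d * (a * s) := by
        simp only [mul_assoc]
      rw [this, hsa1, has1, one_mul, mul_one]
    rwa [e1] at hconj
  -- pass to the limit ε → 0⁺
  have htend : Filter.Tendsto (fun ε : ℝ => b + ε • (1 : A) - d)
      (nhdsWithin 0 (Set.Ioi 0)) (nhds (b - d)) := by
    have hcont : Continuous fun ε : ℝ => b + ε • (1 : A) - d := by continuity
    have := (hcont.tendsto 0).mono_left (nhdsWithin_le_nhds (s := Set.Ioi 0))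
    simpa using this
  have hmem : b - d ∈ {a : A | 0 ≤ a} := by
    refine CStarAlgebra.isClosed_nonneg.mem_of_tendsto htend ?_
    filter_upwards [self_mem_nhdsWithin] with ε hε
    exact sub_nonneg.mpr (key ε hε)
  exact sub_nonneg.mp hmem
end
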